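/- Let n ≥ 1. The permutohedron P_n ⊆ ℝ^n is a generalized permutohedron: for every edge [x,y] of P_n there exist indices i ≠ j and a scalar c ∈ ℝ with y - x = c • (e_i - e_j). -/

import Mathlib

open Set

/-- An endpoint of a segment is an extreme point of the segment. -/
private lemma endpoint_left_extreme {E : Type*} [AddCommGroup E] [Module ℝ E]
    {x y a b : E} (hxy : x ≠ y)
    (ha : a ∈ segment ℝ x y) (hb : b ∈ segment ℝ x y)
    (hx : x ∈ openSegment ℝ a b) : a = x ∧ b = x := by
  rw [segment_eq_image'] at ha hb
  obtain ⟨p, hp, rfl⟩ := ha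
  obtain ⟨q, hq, rfl⟩ := hb
  rw [openSegment_eq_image'] at hx
  obtain ⟨t, ht, hxeq⟩ := hx
  have hs : ((1 - t) * p + t * q) • (y - x) = 0 := by
    linear_combination (norm := module) hxeq
  have hsum : (1 - t) * p + t * q = 0 := by
    rcases smul_eq_zero.1 hs with h | h
    · exact h
    · exact absurd (by linear_combination (norm := module) h) hxy.symm
  have hp0 : p = 0 := by nlinarith [ht.1, ht.2, hp.1, hq.1]
  have hq0 : q = 0 := by nlinarith [ht.1, ht.2, hp.1, hq.1]
  constructor <;> simp [hp0, hq0]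

/-- The permutohedron `Pₙ ⊆ ℝⁿ` is a generalized permutohedron: for
every edge `[x,y]` there are indices `i ≠ j` and a scalar `c` with
`y - x = c • (e_i - e_j)`. -/
theorem permutohedron_is_generalized_permutohedron
    (n : ℕ) (hn : 1 ≤ n)
    (P : Set (Fin n → ℝ))
    (hP : P = convexHull ℝ
      {x : Fin n → ℝ | ∃ σ : Equiv.Perm (Fin n), x = fun i => ((σ i : ℕ) : ℝ) + 1})
    (x y : Fin n → ℝ) (hxy : x ≠ y) (hedge : IsExtreme ℝ P (segment ℝ x y)) :
    ∃ i j : Fin n, i ≠ j ∧ ∃ c : ℝ,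
      y - x = c • ((Pi.single i 1 : Fin n → ℝ) - Pi.single j 1) := by
  classical
  set V := {x : Fin n → ℝ | ∃ σ : Equiv.Perm (Fin n), x = fun i => ((σ i : ℕ) : ℝ) + 1}
    with hV
  have hVP : V ⊆ P := hP ▸ subset_convexHull ℝ V
  have hPconv : Convex ℝ P := hP ▸ convex_convexHull ℝ V
  have hxP : x ∈ P := hedge.1 (left_mem_segment ℝ x y)
  have hyP : y ∈ P := hedge.1 (right_mem_segment ℝ x y)
  -- x and y are extreme points of P, hence vertices
  have hxV : x ∈ V := by
    have : x ∈ P.extremePoints ℝ := by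
      refine ⟨hxP, fun a ha b hb hmem => ?_⟩
      obtain ⟨haS, hbS⟩ := And.intro (hedge.2 ha hb (left_mem_segment ℝ x y) hmem)
        (hedge.right_mem_of_mem_openSegment ha hb (left_mem_segment ℝ x y) hmem)
      exact (endpoint_left_extreme hxy haS hbS hmem).1
    rw [hP] at this
    exact extremePoints_convexHull_subset this
  have hyV : y ∈ V := by
    have : y ∈ P.extremePoints ℝ := by
      refine ⟨hyP, fun a ha b hb hmem => ?_⟩
      obtain ⟨haS, hbS⟩ := And.intro (hedge.2 ha hb (right_mem_segment ℝ x y) hmem)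
        (hedge.right_mem_of_mem_openSegment ha hb (right_mem_segment ℝ x y) hmem)
      rw [segment_symm] at haS hbS
      exact (endpoint_left_extreme (Ne.symm hxy) haS hbS hmem).1
    rw [hP] at this
    exact extremePoints_convexHull_subset this
  obtain ⟨σ, hσ⟩ := hxV
  obtain ⟨τ, hτ⟩ := hyV
  have hστ : σ ≠ τ := by
    rintro rfl; exact hxy (hσ.trans hτ.symm)
  -- find an inversion pair
  obtain ⟨i, j, hij1, hij2⟩ : ∃ i j : Fin n, σ i < σ j ∧ τ j < τ i := by
    by_contra h
    push_neg at h
    apply hστ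
    have hmono : StrictMono (fun k => τ (σ.symm k)) := by
      intro k l hkl
      have h1 : σ (σ.symm k) < σ (σ.symm l) := by
        rwa [σ.apply_symm_apply, σ.apply_symm_apply]
      have h2 : τ (σ.symm k) ≤ τ (σ.symm l) := h _ _ h1
      refine lt_of_le_of_ne h2 fun he => ?_
      have hk : k = l := σ.symm.injective (τ.injective he)
      exact absurd hk (ne_of_lt hkl)
    have hrange : range (fun k => τ (σ.symm k)) = range (id : Fin n → Fin n) := by
      rw [range_id]
      exact range_eq_univ.2 fun k => ⟨σ (τ.symm k), by simp⟩
    haveI inst : WellFoundedLT (Fin n) := inferInstance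
    have hid : (fun k => τ (σ.symm k)) = id :=
      (@StrictMono.range_inj (Fin n) (Fin n) _ _ inst _ id hmono strictMono_id).1 hrange
    apply Equiv.coe_fn_injective
    funext k
    have := congrFun hid (σ k)
    simpa using this.symm
  have hijne : i ≠ j := fun he => absurd (he ▸ rfl) (ne_of_lt hij1)
  -- set up the perturbation
  set d : Fin n → ℝ := (Pi.single i 1 : Fin n → ℝ) - Pi.single j 1 with hd
  set a : ℝ := x j - x i with ha'
  set b : ℝ := y i - y j with hb'
  have hapos : 0 < a := by
    rw [ha', hσ]
    simp only
    have : ((σ i : ℕ) : ℝ) < ((σ j : ℕ) : ℝ) := by exact_mod_cast hij1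
    linarith
  have hbpos : 0 < b := by
    rw [hb', hτ]
    simp only
    have : ((τ j : ℕ) : ℝ) < ((τ i : ℕ) : ℝ) := by exact_mod_cast hij2
    linarith
  set ε : ℝ := a * b / (a + b) with hε
  have hεpos : 0 < ε := div_pos (mul_pos hapos hbpos) (by linarith)
  -- the swapped vertices
  have hwx : (fun k => x (Equiv.swap i j k)) ∈ V := by
    refine ⟨(Equiv.swap i j).trans σ, ?_⟩
    funext k
    simp [hσ, Equiv.trans_apply]
  have hwy : (fun k => y (Equiv.swap i j k)) ∈ V := by
    refine ⟨(Equiv.swap i j).trans τ, ?_⟩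
    funext k
    simp [hτ, Equiv.trans_apply]
  have hswapx : (fun k => x (Equiv.swap i j k)) - x = a • d := by
    funext k
    by_cases hki : k = i
    · subst hki
      simp [hd, Equiv.swap_apply_left, Pi.single_apply, hijne, ha']
    · by_cases hkj : k = j
      · subst hkj
        simp [hd, Equiv.swap_apply_right, Pi.single_apply, Ne.symm hijne, ha']
        try ring
      · simp [hd, Equiv.swap_apply_of_ne_of_ne hki hkj, Pi.single_apply, hki, hkj]
  have hswapy : (fun k => y (Equiv.swap i j k)) - y = (-b) • d := by
    funext k
    by_cases hki : k = i
    · subst hki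
      simp [hd, Equiv.swap_apply_left, Pi.single_apply, hijne, hb']
      try ring
    · by_cases hkj : k = j
      · subst hkj
        simp [hd, Equiv.swap_apply_right, Pi.single_apply, Ne.symm hijne, hb']
        try ring
      · simp [hd, Equiv.swap_apply_of_ne_of_ne hki hkj, Pi.single_apply, hki, hkj]
  -- the perturbed points u = x + ε•d, v = y - ε•d are in P
  set γ : ℝ := b / (a + b) with hγ
  set δ : ℝ := a / (a + b) with hδ
  have hγ01 : 0 ≤ γ ∧ γ ≤ 1 := by
    constructor
    · positivity
    · rw [hγ, div_le_one (by linarith)]; linarith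
  have hδ01 : 0 ≤ δ ∧ δ ≤ 1 := by
    constructor
    · positivity
    · rw [hδ, div_le_one (by linarith)]; linarith
  have huP : x + ε • d ∈ P := by
    have hmem := hPconv hxP (hVP hwx) (by linarith [hγ01.2] : (0:ℝ) ≤ 1 - γ) hγ01.1
      (by ring)
    have heq : (1 - γ) • x + γ • (fun k => x (Equiv.swap i j k)) = x + ε • d := by
      have : (1 - γ) • x + γ • (fun k => x (Equiv.swap i j k))
          = x + γ • ((fun k => x (Equiv.swap i j k)) - x) := by module
      rw [this, hswapx, smul_smul]
      congr 1
      rw [hε, hγ]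
      congr 1
      field_simp
      try ring
    rw [← heq]
    exact hmem
  have hvP : y - ε • d ∈ P := by
    have hmem := hPconv hyP (hVP hwy) (by linarith [hδ01.2] : (0:ℝ) ≤ 1 - δ) hδ01.1
      (by ring)
    have heq : (1 - δ) • y + δ • (fun k => y (Equiv.swap i j k)) = y - ε • d := by
      have : (1 - δ) • y + δ • (fun k => y (Equiv.swap i j k))
          = y + δ • ((fun k => y (Equiv.swap i j k)) - y) := by module
      rw [this, hswapy, smul_smul]
      have : δ * (-b) = -ε := by
        rw [hε, hδ]
        field_simp
        try ring
      rw [this]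
      module
    rw [← heq]
    exact hmem
  -- the key dichotomy
  have hdne : d ≠ 0 := by
    intro h0
    have := congrFun h0 i
    simp [hd, Pi.single_apply, hijne] at this
  by_cases huv : x + ε • d = y - ε • d
  · refine ⟨i, j, hijne, 2 * ε, ?_⟩
    have : y - x = (2 * ε) • d := by
      have h2 : y = x + ε • d + ε • d := by
        rw [huv]; module
      rw [h2]; module
    exact this
  · -- midpoint argument
    have hmid : (1/2 : ℝ) • (x + ε • d) + (1/2 : ℝ) • (y - ε • d)
        = (1/2 : ℝ) • x + (1/2 : ℝ) • y := by module
    have hmseg : (1/2 : ℝ) • x + (1/2 : ℝ) • y ∈ segment ℝ x y :=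
      ⟨1/2, 1/2, by norm_num, by norm_num, by norm_num, rfl⟩
    have hmopen : (1/2 : ℝ) • x + (1/2 : ℝ) • y
        ∈ openSegment ℝ (x + ε • d) (y - ε • d) :=
      ⟨1/2, 1/2, by norm_num, by norm_num, by norm_num, hmid⟩
    obtain ⟨huS, hvS⟩ := And.intro (hedge.2 huP hvP hmseg hmopen)
      (hedge.right_mem_of_mem_openSegment huP hvP hmseg hmopen)
    obtain ⟨p, q, hp, hq, hpq, hueq⟩ := huS
    -- p • x + q • y = x + ε • d, p + q = 1
    have hkey : ε • d = q • (y - x) := by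
      have hp' : p = 1 - q := by linarith
      rw [hp'] at hueq
      linear_combination (norm := module) hueq.symm
    have hq0 : q ≠ 0 := by
      intro h0
      rw [h0, zero_smul] at hkey
      rcases smul_eq_zero.1 hkey with h | h
      · exact absurd h (ne_of_gt hεpos)
      · exact hdne h
    refine ⟨i, j, hijne, q⁻¹ * ε, ?_⟩
    have h3 : (q⁻¹ * ε) • d = y - x := by
      have := congrArg (fun z => q⁻¹ • z) hkey
      simp only [smul_smul] at this
      rwa [inv_mul_cancel₀ hq0, one_smul] at this
    exact h3.symm
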